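/- For Q-almost every environment ω and every t ∈ ℤ, the scale k_t := inf{k ≥ k_* : t is not k-active} is finite. -/

import Mathlib

open MeasureTheory Filter Topology
set_option maxHeartbeats 1600000

/-- `b` is the right endpoint of an occurrence of `I_ℓ` (the word of `ℓ-1` ones
followed by a zero) in the environment `e : ℤ → Bool`. -/
def occEnd (ℓ : ℕ) (e : ℤ → Bool) (b : ℤ) : Prop :=
  ∀ i < ℓ, e (b - ℓ + 1 + i) = decide (i < ℓ - 1)

/-- Number of right endpoints of occurrences of `I_ℓ` in the interval `[a, t]`. -/
noncomputable def countOcc (ℓ : ℕ) (e : ℤ → Bool) (a t : ℤ) : ℕ :=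
  ((Finset.Icc a t).filter
    (fun c => ∀ i ∈ Finset.range ℓ, e (c - ℓ + 1 + i) = decide (i < ℓ - 1))).card

/-- The scale-`k` word length `ℓ_k = ⌈(1+ε)^k⌉`. -/
noncomputable def lenScale (ε : ℝ) (k : ℕ) : ℕ := ⌈(1 + ε) ^ k⌉₊

/-- `β_k = 2^{ℓ_k}` as a real number. -/
noncomputable def betaScale (ε : ℝ) (k : ℕ) : ℝ := 2 ^ lenScale ε k

/-- `ν_k = β_k / β_{k-1}`. -/
noncomputable def nuScale (ε : ℝ) (k : ℕ) : ℝ := betaScale ε k / betaScale ε (k - 1)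

/-- `a` is the left endpoint of the `ℓ`-block containing `t`: the last occurrence
right endpoint of `I_ℓ` at or before `t`. -/
def leftEnd (ℓ : ℕ) (e : ℤ → Bool) (t a : ℤ) : Prop :=
  occEnd ℓ e a ∧ a ≤ t ∧ ∀ c, a < c → c ≤ t → ¬ occEnd ℓ e c

/-- `t` is `k`-active in the environment `e`: for every scale `j ∈ {k_*, …, k}`,
`t` lies in the beginning of its `j`-block and within distance `β_{j+1}` of its
left endpoint.  (At the lowest scale `k_*` the beginning is the set of points at
distance at most `β_{k_*}^{1+ε}` from the left endpoint.) -/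
noncomputable def isActive (ε : ℝ) (kstar k : ℕ) (e : ℤ → Bool) (t : ℤ) : Prop :=
  ∀ j, kstar ≤ j → j ≤ k →
    ∃ a : ℤ, leftEnd (lenScale ε j) e t a ∧
      ((t : ℝ) - a < betaScale ε (j + 1)) ∧
      (if j = kstar then ((t : ℝ) - a ≤ (betaScale ε kstar) ^ (1 + ε))
       else countOcc (lenScale ε (j - 1)) e (a + 1) t < ⌊(nuScale ε j) ^ ((1 : ℝ) - ε)⌋₊)

/-- For `Q`-almost every environment and every `t ∈ ℤ`, the scale
`k_t = inf{k ≥ k_* : t is not k-active}` is finite; i.e. the event that `t` is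
`k`-active for all `k ≥ k_*` is `Q`-null. -/
lemma abstract_bound (ε x ℓ L L' d N E : ℝ) (hε0 : 0 < ε) (hε1 : ε < 1) (hx : 1 ≤ x)
    (hℓlb : x ≤ ℓ) (hℓub : ℓ ≤ x + 1)
    (hLlb : (1 + ε) * x ≤ L) (hLub : L ≤ (1 + ε) * x + 1)
    (hL'lb : 0 ≤ L') (hL'ub : L' ≤ (1 + ε) ^ 2 * x + 1)
    (hd : d = L - ℓ) (hdnn : 0 ≤ d)
    (hN0 : 0 ≤ N) (hN : N ≤ (2:ℝ) ^ ((1 - ε) * d))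
    (hE0 : 0 ≤ E) (hE : E ≤ (2:ℝ) ^ (-(L + L'))) :
    (L + N * ((2:ℝ) ^ ℓ * (L + L')) * ℓ) * (2:ℝ) ^ (-L) + (2:ℝ) ^ L' * N * ((2:ℝ) ^ (-L) * E)
      ≤ 36 * x ^ 2 * (2:ℝ) ^ (-(ε ^ 2 * x)) := by
  have h2 : (1:ℝ) ≤ 2 := by norm_num
  have hx0 : (0:ℝ) < x := lt_of_lt_of_le one_pos hx
  have hεx : 0 ≤ ε * x := by positivity
  have hε2x : ε ^ 2 * x ≤ x := by nlinarith
  have hε2x0 : 0 ≤ ε ^ 2 * x := by positivity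
  have hLx : L ≤ 3 * x := by nlinarith
  have hL'x : L' ≤ 5 * x := by nlinarith
  have hℓ2x : ℓ ≤ 2 * x := by nlinarith
  have hL0 : 0 < L := by nlinarith
  have hdlb : ε * x - 1 ≤ d := by rw [hd]; nlinarith
  set y : ℝ := (2:ℝ) ^ (-(ε ^ 2 * x)) with hy
  have hy0 : (0:ℝ) < y := by positivity
  have hA : (2:ℝ) ^ (-L) ≤ y :=
    Real.rpow_le_rpow_of_exponent_le h2 (by linarith)
  have t1a : L * (2:ℝ) ^ (-L) ≤ 3 * x * y :=
    mul_le_mul hLx hA (by positivity) (by nlinarith)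
  have hNr : N * (2:ℝ) ^ ℓ * (2:ℝ) ^ (-L) ≤ (2:ℝ) ^ (-(ε * d)) := by
    calc N * (2:ℝ) ^ ℓ * (2:ℝ) ^ (-L)
        ≤ (2:ℝ) ^ ((1 - ε) * d) * (2:ℝ) ^ ℓ * (2:ℝ) ^ (-L) := by
          apply mul_le_mul_of_nonneg_right
            (mul_le_mul_of_nonneg_right hN (by positivity)) (by positivity)
      _ = (2:ℝ) ^ ((1 - ε) * d + ℓ + -L) := by
          rw [← Real.rpow_add two_pos, ← Real.rpow_add two_pos]
      _ ≤ (2:ℝ) ^ (-(ε * d)) := by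
          apply Real.rpow_le_rpow_of_exponent_le h2
          apply le_of_eq
          rw [hd]; ring
  have hεd : (2:ℝ) ^ (-(ε * d)) ≤ 2 * y := by
    have hh := mul_le_mul_of_nonneg_left hdlb hε0.le
    have hh2 : ε * (ε * x - 1) = ε ^ 2 * x - ε := by ring
    have h1 : (2:ℝ) ^ (-(ε * d)) ≤ (2:ℝ) ^ (1 + -(ε ^ 2 * x)) := by
      apply Real.rpow_le_rpow_of_exponent_le h2
      linarith
    calc (2:ℝ) ^ (-(ε * d)) ≤ (2:ℝ) ^ (1 + -(ε ^ 2 * x)) := h1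
      _ = 2 * y := by rw [Real.rpow_add two_pos, Real.rpow_one]
  have t1b : N * ((2:ℝ) ^ ℓ * (L + L')) * ℓ * (2:ℝ) ^ (-L) ≤ 32 * x ^ 2 * y := by
    have heq : N * ((2:ℝ) ^ ℓ * (L + L')) * ℓ * (2:ℝ) ^ (-L)
        = (N * (2:ℝ) ^ ℓ * (2:ℝ) ^ (-L)) * ((L + L') * ℓ) := by ring
    rw [heq]
    have hLL : (L + L') * ℓ ≤ 16 * x ^ 2 := by
      have h8 : L + L' ≤ 8 * x := by linarith
      calc (L + L') * ℓ ≤ 8 * x * (2 * x) :=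
            mul_le_mul h8 hℓ2x (by linarith) (by positivity)
        _ = 16 * x ^ 2 := by ring
    calc (N * (2:ℝ) ^ ℓ * (2:ℝ) ^ (-L)) * ((L + L') * ℓ)
        ≤ (2 * y) * (16 * x ^ 2) := by
          apply mul_le_mul (hNr.trans hεd) hLL
            (mul_nonneg (by linarith) (by linarith)) (by positivity)
      _ = 32 * x ^ 2 * y := by ring
  have t2 : (2:ℝ) ^ L' * N * ((2:ℝ) ^ (-L) * E) ≤ x ^ 2 * y := by
    have hεdnn : 0 ≤ ε * d := mul_nonneg hε0.le hdnn
    calc (2:ℝ) ^ L' * N * ((2:ℝ) ^ (-L) * E)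
        ≤ (2:ℝ) ^ L' * (2:ℝ) ^ ((1 - ε) * d) * ((2:ℝ) ^ (-L) * (2:ℝ) ^ (-(L + L'))) := by
          apply mul_le_mul (mul_le_mul_of_nonneg_left hN (by positivity))
            (mul_le_mul_of_nonneg_left hE (by positivity))
            (mul_nonneg (by positivity) hE0) (by positivity)
      _ = (2:ℝ) ^ (L' + (1 - ε) * d + (-L + -(L + L'))) := by
          rw [← Real.rpow_add two_pos, ← Real.rpow_add two_pos, ← Real.rpow_add two_pos]
      _ ≤ y := by
          apply Real.rpow_le_rpow_of_exponent_le h2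
          have hexp : L' + (1 - ε) * d + (-L + -(L + L')) = -L - ℓ - ε * d := by
            rw [hd]; ring
          rw [hexp]
          have hεdnn' : 0 ≤ ε * d := hεdnn
          linarith
      _ ≤ x ^ 2 * y := by
          nth_rewrite 1 [← one_mul y]
          exact mul_le_mul_of_nonneg_right (by nlinarith) hy0.le
  have hxx : x ≤ x ^ 2 := by nlinarith
  have hxy : 3 * x * y ≤ 3 * x ^ 2 * y :=
    mul_le_mul_of_nonneg_right (by nlinarith) hy0.le
  calc (L + N * ((2:ℝ) ^ ℓ * (L + L')) * ℓ) * (2:ℝ) ^ (-L)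
        + (2:ℝ) ^ L' * N * ((2:ℝ) ^ (-L) * E)
      = L * (2:ℝ) ^ (-L) + N * ((2:ℝ) ^ ℓ * (L + L')) * ℓ * (2:ℝ) ^ (-L)
        + (2:ℝ) ^ L' * N * ((2:ℝ) ^ (-L) * E) := by ring
    _ ≤ 3 * x ^ 2 * y + 32 * x ^ 2 * y + x ^ 2 * y := by linarith
    _ = 36 * x ^ 2 * y := by ring

noncomputable def myN (ε : ℝ) (k : ℕ) : ℕ := ⌊(nuScale ε k) ^ ((1:ℝ) - ε)⌋₊
noncomputable def myr (ε : ℝ) (k : ℕ) : ℕ :=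
  2 ^ (lenScale ε (k - 1)) * (lenScale ε k + lenScale ε (k + 1))
noncomputable def myM (ε : ℝ) (k : ℕ) : ℕ :=
  lenScale ε k + (myN ε k * myr ε k) * lenScale ε (k - 1)
noncomputable def myR (ε : ℝ) (k : ℕ) : ℝ :=
  (myM ε k) * (1/2 : ℝ) ^ (lenScale ε k)
    + 2 ^ (lenScale ε (k + 1)) * (myN ε k)
      * ((1/2 : ℝ) ^ (lenScale ε k) * (1 - (1/2 : ℝ) ^ (lenScale ε (k - 1))) ^ (myr ε k))

lemma half_pow (n : ℕ) : (1/2 : ℝ) ^ n = (2:ℝ) ^ (-(n:ℝ)) := by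
  rw [Real.rpow_neg (by norm_num), Real.rpow_natCast]
  simp [one_div, inv_pow]

lemma two_pow_nat (n : ℕ) : ((2:ℕ) ^ n : ℝ) = (2:ℝ) ^ ((n:ℝ)) := by
  push_cast
  rw [Real.rpow_natCast]

lemma lenScale_one_le (ε : ℝ) (hε0 : 0 < ε) (k : ℕ) : 1 ≤ lenScale ε k :=
  Nat.ceil_pos.mpr (by positivity)

lemma lenScale_mono (ε : ℝ) (hε0 : 0 < ε) {k k' : ℕ} (h : k ≤ k') :
    lenScale ε k ≤ lenScale ε k' :=
  Nat.ceil_le_ceil (pow_le_pow_right₀ (by linarith) h)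

lemma nuScale_eq (ε : ℝ) (hε0 : 0 < ε) (k : ℕ) (hk : 1 ≤ k) :
    nuScale ε k = (2:ℝ) ^ ((lenScale ε k - lenScale ε (k-1) : ℕ)) := by
  rw [nuScale, betaScale, betaScale, pow_sub₀ _ (by norm_num) (lenScale_mono ε hε0 (by omega)),
    div_eq_mul_inv]

lemma myR_nonneg (ε : ℝ) (hε0 : 0 < ε) (k : ℕ) : 0 ≤ myR ε k := by
  rw [myR]
  have h1 : (1/2 : ℝ) ^ (lenScale ε (k-1)) ≤ 1 := pow_le_one₀ (by norm_num) (by norm_num)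
  apply add_nonneg (by positivity)
  apply mul_nonneg (by positivity)
  apply mul_nonneg (by positivity)
  exact pow_nonneg (by linarith) _

lemma myR_le (ε : ℝ) (hε0 : 0 < ε) (hε1 : ε < 1) (k : ℕ) (hk : 1 ≤ k) :
    myR ε k ≤ 36 * ((1+ε)^(k-1))^2 * (2:ℝ) ^ (-(ε^2 * (1+ε)^(k-1))) := by
  have hkk : k - 1 + 1 = k := Nat.succ_pred_eq_of_pos hk
  set x : ℝ := (1+ε)^(k-1) with hxdef
  have hx : 1 ≤ x := one_le_pow₀ (by linarith)
  set ℓ := lenScale ε (k-1) with hℓdef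
  set L := lenScale ε k with hLdef
  set L' := lenScale ε (k+1) with hL'def
  have hℓL : ℓ ≤ L := lenScale_mono ε hε0 (by omega)
  have hℓlb : x ≤ (ℓ:ℝ) := Nat.le_ceil x
  have hℓub : (ℓ:ℝ) ≤ x + 1 := (Nat.ceil_lt_add_one (by positivity)).le
  have hpk : (1+ε)^k = (1+ε) * x := by
    conv_lhs => rw [← hkk]
    rw [pow_succ, hxdef]; ring
  have hpk' : (1+ε)^(k+1) = (1+ε)^2 * x := by
    conv_lhs => rw [show k + 1 = (k-1) + 2 by omega]
    rw [pow_add, hxdef]; ring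
  have hLlb : (1+ε) * x ≤ (L:ℝ) := by rw [← hpk]; exact Nat.le_ceil _
  have hLub : (L:ℝ) ≤ (1+ε) * x + 1 := by
    rw [← hpk]; exact (Nat.ceil_lt_add_one (by positivity)).le
  have hL'lb : (0:ℝ) ≤ (L':ℝ) := by positivity
  have hL'ub : (L':ℝ) ≤ (1+ε)^2 * x + 1 := by
    rw [← hpk']; exact (Nat.ceil_lt_add_one (by positivity)).le
  set d := L - ℓ with hddef
  have hd : (d:ℝ) = (L:ℝ) - (ℓ:ℝ) := by
    rw [hddef]; push_cast [Nat.cast_sub hℓL]; ring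
  have hN : ((myN ε k : ℕ):ℝ) ≤ (2:ℝ) ^ ((1 - ε) * (d:ℝ)) := by
    rw [myN]
    calc ((⌊(nuScale ε k) ^ ((1:ℝ) - ε)⌋₊ : ℕ):ℝ) ≤ (nuScale ε k) ^ ((1:ℝ) - ε) :=
          Nat.floor_le (Real.rpow_nonneg (by
            rw [nuScale_eq ε hε0 k hk]; positivity) _)
      _ = (2:ℝ) ^ ((1 - ε) * (d:ℝ)) := by
          rw [nuScale_eq ε hε0 k hk, ← hddef, ← Real.rpow_natCast 2 d,
            ← Real.rpow_mul (by norm_num), mul_comm]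
  have hq1 : (1/2 : ℝ) ^ ℓ ≤ 1 := pow_le_one₀ (by norm_num) (by norm_num)
  have hE0 : (0:ℝ) ≤ (1 - (1/2:ℝ)^ℓ) ^ (myr ε k) := pow_nonneg (by linarith) _
  have hE : (1 - (1/2:ℝ)^ℓ) ^ (myr ε k) ≤ (2:ℝ) ^ (-((L:ℝ) + (L':ℝ))) := by
    set q : ℝ := (1/2:ℝ)^ℓ with hq
    have hq0 : 0 < q := by positivity
    have h1 : 1 - q ≤ Real.exp (-q) := by
      have := Real.add_one_le_exp (-q); linarith
    have h2 : (1 - q) ^ (myr ε k) ≤ Real.exp (-q) ^ (myr ε k) :=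
      pow_le_pow_left₀ (by linarith) h1 _
    have h3 : Real.exp (-q) ^ (myr ε k) = Real.exp (-(q * myr ε k)) := by
      rw [← Real.exp_nat_mul]; ring_nf
    have h4 : q * (myr ε k) = ((L:ℝ) + (L':ℝ)) := by
      rw [hq, myr, ← hℓdef, ← hLdef, ← hL'def]
      push_cast
      have h2ℓ : (1/2:ℝ)^ℓ * 2^ℓ = 1 := by
        rw [← mul_pow]; norm_num
      rw [← mul_assoc, h2ℓ, one_mul]
    have h5 : Real.exp (-((L:ℝ) + (L':ℝ))) ≤ (2:ℝ) ^ (-((L:ℝ) + (L':ℝ))) := by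
      rw [Real.rpow_def_of_pos (by norm_num)]
      apply Real.exp_le_exp.mpr
      have hlog1 : Real.log 2 ≤ 1 := le_of_lt (lt_trans Real.log_two_lt_d9 (by norm_num))
      have hlog0 : 0 < Real.log 2 := Real.log_pos (by norm_num)
      have hz : (0:ℝ) ≤ (L:ℝ) + (L':ℝ) := by positivity
      have hm := mul_le_mul_of_nonneg_right hlog1 hz
      rw [mul_neg]
      linarith
    calc (1 - q) ^ (myr ε k) ≤ Real.exp (-q) ^ (myr ε k) := h2
      _ = Real.exp (-(q * myr ε k)) := h3
      _ = Real.exp (-((L:ℝ) + (L':ℝ))) := by rw [h4]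
      _ ≤ _ := h5
  have hmain := abstract_bound ε x (ℓ:ℝ) (L:ℝ) (L':ℝ) (d:ℝ) (myN ε k : ℝ)
    ((1 - (1/2:ℝ)^ℓ) ^ (myr ε k)) hε0 hε1 hx hℓlb hℓub hLlb hLub hL'lb hL'ub hd
    (by positivity) (by positivity) hN hE0 hE
  calc myR ε k = ((L:ℝ) + (myN ε k : ℝ) * ((2:ℝ) ^ (ℓ:ℝ) * ((L:ℝ) + (L':ℝ))) * (ℓ:ℝ))
        * (2:ℝ) ^ (-(L:ℝ))
      + (2:ℝ) ^ ((L':ℝ)) * (myN ε k : ℝ)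
        * ((2:ℝ) ^ (-(L:ℝ)) * (1 - (1/2:ℝ)^ℓ) ^ (myr ε k)) := by
        rw [myR, myM, myr, ← hℓdef, ← hLdef, ← hL'def, half_pow]
        push_cast
        rw [← Real.rpow_natCast 2 ℓ, ← Real.rpow_natCast 2 L']
    _ ≤ _ := hmain

lemma g_tendsto (ε : ℝ) (hε0 : 0 < ε) (hε1 : ε < 1) :
    Tendsto (fun k : ℕ => 36 * ((1+ε)^(k-1))^2 * (2:ℝ) ^ (-(ε^2 * (1+ε)^(k-1)))) atTop (𝓝 0) := by
  set c : ℝ := ε^2 * Real.log 2 with hc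
  have hc0 : 0 < c := by
    have := Real.log_pos (by norm_num : (1:ℝ) < 2)
    positivity
  have hxk : Tendsto (fun k : ℕ => ((1+ε)^(k-1) : ℝ)) atTop atTop :=
    (tendsto_pow_atTop_atTop_of_one_lt (by linarith : (1:ℝ) < 1+ε)).comp (tendsto_sub_atTop_nat 1)
  have hz : Tendsto (fun k : ℕ => c * ((1+ε)^(k-1) : ℝ)) atTop atTop :=
    Tendsto.const_mul_atTop hc0 hxk
  have hcomp := (Real.tendsto_pow_mul_exp_neg_atTop_nhds_zero 2).comp hz
  have heq : (fun k : ℕ => 36 * ((1+ε)^(k-1))^2 * (2:ℝ) ^ (-(ε^2 * (1+ε)^(k-1))))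
      = fun k : ℕ => (36 / c^2) *
        ((c * ((1+ε)^(k-1)))^2 * Real.exp (-(c * ((1+ε)^(k-1))))) := by
    funext k
    set x : ℝ := (1+ε)^(k-1)
    have hx0 : (0:ℝ) < x := by positivity
    rw [Real.rpow_def_of_pos (by norm_num : (0:ℝ) < 2)]
    have hlog : Real.log 2 * -(ε^2 * x) = -(c * x) := by rw [hc]; ring
    rw [hlog]
    field_simp
  rw [heq]
  have := hcomp.const_mul (36 / c^2)
  simpa using this

lemma occEnd_iff (ℓ : ℕ) (hℓ : 1 ≤ ℓ) (e : ℤ → Bool) (c : ℤ) :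
    occEnd ℓ e c ↔ ∀ s ∈ Finset.Icc (c - ℓ + 1) c, e s = decide (s < c) := by
  constructor
  · intro h s hs
    rw [Finset.mem_Icc] at hs
    obtain ⟨i, hi, rfl⟩ : ∃ i : ℕ, i < ℓ ∧ s = c - ℓ + 1 + i :=
      ⟨(s - (c - ℓ + 1)).toNat, by omega, by omega⟩
    rw [h i hi]
    exact decide_eq_decide.mpr (by constructor <;> (intro h'; omega))
  · intro h i hi
    have := h (c - ℓ + 1 + i) (by rw [Finset.mem_Icc]; omega)
    rw [this]
    exact decide_eq_decide.mpr (by constructor <;> (intro h'; omega))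

lemma pigeonhole (ℓ : ℕ) (hℓ : 1 ≤ ℓ) (e : ℤ → Bool) (a t : ℤ) (N rr : ℕ) (L : ℕ)
    (hfar : a + (L + (N * rr) * ℓ : ℕ) ≤ t) (hL : ℓ ≤ L)
    (hcount : countOcc ℓ e (a + 1) t < N) :
    ∃ g < N, ∀ j < rr, ¬ occEnd ℓ e (a + L + (g * rr + j : ℕ) * ℓ) := by
  by_contra hcon
  push_neg at hcon
  have hch : ∀ g : ℕ, ∃ i : ℕ, g < N → (i < rr ∧ occEnd ℓ e (a + L + (g * rr + i : ℕ) * ℓ)) := by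
    intro g
    by_cases hg : g < N
    · obtain ⟨j, hj, hocc⟩ := hcon g hg
      exact ⟨j, fun _ => ⟨hj, hocc⟩⟩
    · exact ⟨0, fun h => absurd h hg⟩
  choose f hf using hch
  have hKle : ∀ g, g < N → g * rr + f g ≤ N * rr := by
    intro g hg
    have h1 : g + 1 ≤ N := hg
    have h2 : (g + 1) * rr ≤ N * rr := Nat.mul_le_mul_right rr h1
    have h3 : f g < rr := (hf g hg).1
    nlinarith
  have hmem : ∀ g ∈ Finset.range N, (a + L + ((g * rr + f g : ℕ) : ℤ) * ℓ) ∈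
      (Finset.Icc (a + 1) t).filter
        (fun c => ∀ i ∈ Finset.range ℓ, e (c - ℓ + 1 + i) = decide (i < ℓ - 1)) := by
    intro g hg
    rw [Finset.mem_range] at hg
    obtain ⟨hfr, hocc⟩ := hf g hg
    rw [Finset.mem_filter, Finset.mem_Icc]
    refine ⟨⟨?_, ?_⟩, ?_⟩
    · have h0 : (0:ℤ) ≤ ((g * rr + f g : ℕ) : ℤ) * (ℓ:ℤ) := by positivity
      have h1 : (1:ℤ) ≤ (L:ℤ) := by exact_mod_cast hℓ.trans hL
      linarith
    · have h4 : (L + (g * rr + f g) * ℓ : ℕ) ≤ (L + (N * rr) * ℓ : ℕ) :=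
        Nat.add_le_add_left (Nat.mul_le_mul_right ℓ (hKle g hg)) L
      have h5 : a + ((L + (g * rr + f g) * ℓ : ℕ) : ℤ) ≤ a + ((L + (N * rr) * ℓ : ℕ) : ℤ) := by
        exact (add_le_add_iff_left a).mpr (Int.ofNat_le.mpr h4)
      calc a + (L:ℤ) + ((g * rr + f g : ℕ) : ℤ) * ℓ
          = a + ((L + (g * rr + f g) * ℓ : ℕ) : ℤ) := by push_cast; ring
        _ ≤ a + ((L + (N * rr) * ℓ : ℕ) : ℤ) := h5
        _ ≤ t := hfar
    · intro i hi
      rw [Finset.mem_range] at hi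
      exact hocc i hi
  have hcard : N ≤ countOcc ℓ e (a + 1) t := by
    rw [countOcc, ← Finset.card_range N]
    apply Finset.card_le_card_of_injOn _ hmem
    intro g1 h1 g2 h2 heq
    simp only [Finset.coe_range, Set.mem_Iio] at h1 h2
    simp only at heq
    have hc : ((g1 * rr + f g1 : ℕ) : ℤ) * ℓ = ((g2 * rr + f g2 : ℕ) : ℤ) * ℓ := by linarith
    have hc2 : (((g1 * rr + f g1) * ℓ : ℕ) : ℤ) = (((g2 * rr + f g2) * ℓ : ℕ) : ℤ) := by
      push_cast; push_cast at hc; linarith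
    have hc3 : (g1 * rr + f g1) * ℓ = (g2 * rr + f g2) * ℓ := by exact_mod_cast hc2
    have heqn : g1 * rr + f g1 = g2 * rr + f g2 := Nat.eq_of_mul_eq_mul_right hℓ hc3
    obtain ⟨hf1, _⟩ := hf g1 h1
    obtain ⟨hf2, _⟩ := hf g2 h2
    by_contra hne
    rcases Nat.lt_or_ge g1 g2 with hlt | hge
    · have hg : g1 + 1 ≤ g2 := hlt
      have : (g1 + 1) * rr ≤ g2 * rr := Nat.mul_le_mul_right rr hg
      nlinarith
    · have hlt : g2 < g1 := by omega
      have hg : g2 + 1 ≤ g1 := hlt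
      have : (g2 + 1) * rr ≤ g1 * rr := Nat.mul_le_mul_right rr hg
      nlinarith
  omega

section main
variable {Ω : Type} [MeasurableSpace Ω] (env : ℤ → Ω → Bool)

def cylSet (T : Finset ℤ) (b : ℤ → Bool) : Set Ω := {ω | ∀ s ∈ T, env s ω = b s}

lemma cylSet_meas (hmeas : ∀ i, Measurable (env i)) (T : Finset ℤ) (b : ℤ → Bool) :
    MeasurableSet (cylSet env T b) := by
  have : cylSet env T b = ⋂ s ∈ T, {ω | env s ω = b s} := by
    ext ω; simp [cylSet]
  rw [this]
  exact MeasurableSet.biInter T.countable_toSet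
    (fun s _ => (hmeas s) (measurableSet_singleton (b s)))

variable (μ : Measure Ω) [IsProbabilityMeasure μ]

lemma key (hmeas : ∀ i, Measurable (env i))
    (hiid : ∀ (s : Finset ℤ) (b : ℤ → Bool),
      μ {ω | ∀ i ∈ s, env i ω = b i} = (1 / 2 : ENNReal) ^ s.card)
    (r : ℕ) (blk : ℕ → Finset ℤ) (pat : ℕ → ℤ → Bool) :
    ∀ (T : Finset ℤ) (b : ℤ → Bool),
    (∀ i < r, Disjoint (blk i) T) → (∀ i j, i < j → j < r → Disjoint (blk i) (blk j)) →
    μ (cylSet env T b ∩ ⋂ i ∈ Finset.range r, (cylSet env (blk i) (pat i))ᶜ)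
      = (1 / 2 : ENNReal) ^ T.card
          * ∏ i ∈ Finset.range r, (1 - (1 / 2 : ENNReal) ^ (blk i).card) := by
  induction r with
  | zero =>
      intro T b _ _
      simp only [Finset.range_zero, Finset.prod_empty, mul_one]
      rw [show (⋂ i ∈ (∅ : Finset ℕ), (cylSet env (blk i) (pat i))ᶜ) = Set.univ by simp,
        Set.inter_univ]
      exact hiid T b
  | succ r ih =>
      intro T b hdT hdB
      have hdT' : ∀ i < r, Disjoint (blk i) T := fun i hi => hdT i (hi.trans (Nat.lt_succ_self r))
      have hdB' : ∀ i j, i < j → j < r → Disjoint (blk i) (blk j) :=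
        fun i j h1 h2 => hdB i j h1 (h2.trans (Nat.lt_succ_self r))
      set C := cylSet env T b ∩ ⋂ i ∈ Finset.range r, (cylSet env (blk i) (pat i))ᶜ with hCdef
      have hTr : Disjoint (blk r) T := hdT r (Nat.lt_succ_self r)
      classical
      set b' : ℤ → Bool := fun s => if s ∈ blk r then pat r s else b s with hb'
      have hunion : cylSet env T b ∩ cylSet env (blk r) (pat r) = cylSet env (T ∪ blk r) b' := by
        ext ω
        simp only [cylSet, Set.mem_inter_iff, Set.mem_setOf_eq, Finset.mem_union, hb']
        constructor
        · rintro ⟨h1, h2⟩ s hs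
          by_cases hsr : s ∈ blk r
          · simp [hsr, h2 s hsr]
          · rcases hs with hs | hs
            · simp [hsr, h1 s hs]
            · exact absurd hs hsr
        · intro h
          constructor
          · intro s hs
            have hsr : s ∉ blk r := fun hsr => (Finset.disjoint_left.mp hTr) hsr hs
            have := h s (Or.inl hs); simpa [hsr] using this
          · intro s hs
            have := h s (Or.inr hs); simpa [hs] using this
      set D := cylSet env (T ∪ blk r) b' ∩ ⋂ i ∈ Finset.range r, (cylSet env (blk i) (pat i))ᶜ
        with hDdef
      have hDC : D ⊆ C := by
        rw [hCdef, hDdef, ← hunion]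
        exact Set.inter_subset_inter_left _ Set.inter_subset_left
      have hset : cylSet env T b ∩ ⋂ i ∈ Finset.range (r + 1), (cylSet env (blk i) (pat i))ᶜ
          = C \ D := by
        rw [Finset.range_add_one]
        rw [Finset.set_biInter_insert]
        ext ω
        simp only [hCdef, hDdef, ← hunion, Set.mem_inter_iff, Set.mem_diff, Set.mem_compl_iff]
        tauto
      have hmD : MeasurableSet D := by
        apply (cylSet_meas env hmeas _ _).inter
        exact MeasurableSet.biInter (Finset.range r).countable_toSet
          (fun i _ => (cylSet_meas env hmeas _ _).compl)
      have hμC : μ C = (1 / 2 : ENNReal) ^ T.card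
          * ∏ i ∈ Finset.range r, (1 - (1 / 2 : ENNReal) ^ (blk i).card) := ih T b hdT' hdB'
      have hμD : μ D = (1 / 2 : ENNReal) ^ (T.card + (blk r).card)
          * ∏ i ∈ Finset.range r, (1 - (1 / 2 : ENNReal) ^ (blk i).card) := by
        have := ih (T ∪ blk r) b'
          (fun i hi => Finset.disjoint_union_right.mpr ⟨hdT' i hi, hdB i r hi (Nat.lt_succ_self r)⟩)
          hdB'
        rwa [Finset.card_union_of_disjoint hTr.symm] at this
      rw [hset, measure_diff hDC hmD.nullMeasurableSet (measure_ne_top μ D), hμC, hμD,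
        Finset.prod_range_succ]
      set P := ∏ i ∈ Finset.range r, (1 - (1 / 2 : ENNReal) ^ (blk i).card) with hP
      set a := (1 / 2 : ENNReal) ^ T.card with ha
      set q := (1 / 2 : ENNReal) ^ (blk r).card with hq
      have h1 : (1 / 2 : ENNReal) ^ (T.card + (blk r).card) = a * q := by rw [pow_add]
      rw [h1]
      have hfin : a * P ≠ ⊤ := by
        apply ENNReal.mul_ne_top
        · exact ENNReal.pow_ne_top (by norm_num)
        · refine (lt_of_le_of_lt (Finset.prod_le_one ?_ ?_) ENNReal.one_lt_top).ne
          · intro i _; exact zero_le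
          · intro i _; exact tsub_le_self
      rw [show a * (P * (1 - q)) = a * P * (1 - q) by ring]
      rw [ENNReal.mul_sub (fun _ _ => hfin), mul_one]
      ring_nf
end main

theorem stmt8 {Ω : Type} [MeasurableSpace Ω] (μ : Measure Ω) [IsProbabilityMeasure μ]
    (ε : ℝ) (hε : 0 < ε ∧ ε < 1) (kstar : ℕ) (t : ℤ)
    (env : ℤ → Ω → Bool) (hmeas : ∀ i, Measurable (env i))
    (hiid : ∀ (s : Finset ℤ) (b : ℤ → Bool),
      μ {ω | ∀ i ∈ s, env i ω = b i} = (1 / 2 : ENNReal) ^ s.card) :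
    μ {ω | ∀ k, kstar ≤ k → isActive ε kstar k (fun s => env s ω) t} = 0 := by
  obtain ⟨hε0, hε1⟩ := hε
  set E := {ω | ∀ k, kstar ≤ k → isActive ε kstar k (fun s => env s ω) t} with hE
  have hbound : ∀ k, kstar + 1 ≤ k → 1 ≤ k →
      μ E ≤ ENNReal.ofReal (myR ε k) := by
    intro k hk hk1
    set ℓ := lenScale ε (k - 1) with hℓ
    set L := lenScale ε k with hL
    set L' := lenScale ε (k + 1) with hL'
    set N := myN ε k with hN
    set r := myr ε k with hr
    set M := myM ε k with hM
    have hℓ1 : 1 ≤ ℓ := lenScale_one_le ε hε0 _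
    have hℓL : ℓ ≤ L := lenScale_mono ε hε0 (by omega)
    have hL1 : 1 ≤ L := le_trans hℓ1 hℓL
    -- the covering sets
    set Tc : ℤ → Finset ℤ := fun a => Finset.Icc (a - L + 1) a with hTc
    set bc : ℤ → ℤ → Bool := fun a s => decide (s < a) with hbc
    set cpt : ℤ → ℕ → ℤ := fun a i => a + L + (i : ℤ) * (ℓ : ℤ) with hcpt
    set blkT : ℤ → ℕ → Finset ℤ := fun a i => Finset.Icc (cpt a i - ℓ + 1) (cpt a i) with hblkT
    set blkb : ℤ → ℕ → ℤ → Bool := fun a i s => decide (s < cpt a i) with hblkb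
    set Near : Set Ω :=
      ⋃ a ∈ (Finset.Icc (t - (M:ℤ) + 1) t : Finset ℤ), cylSet env (Tc a) (bc a) with hNear
    set Far : Set Ω :=
      ⋃ a ∈ (Finset.Icc (t - ((2^(L':ℕ) : ℕ) : ℤ) + 1) (t - (M:ℤ)) : Finset ℤ), ⋃ g ∈ Finset.range N,
        (cylSet env (Tc a) (bc a) ∩
          ⋂ j ∈ Finset.range r, (cylSet env (blkT a (g * r + j)) (blkb a (g * r + j)))ᶜ)
      with hFar
    have hsub : E ⊆ Near ∪ Far := by
      intro ω hω
      obtain ⟨a, hle, hdist, hcond⟩ := hω k (by omega) k (by omega) le_rfl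
      rw [if_neg (by omega : ¬ k = kstar)] at hcond
      obtain ⟨hocc, hat, -⟩ := hle
      have hcond' : countOcc ℓ (fun s => env s ω) (a + 1) t < N := hcond
      have hcylmem : ω ∈ cylSet env (Tc a) (bc a) :=
        (occEnd_iff L hL1 (fun s => env s ω) a).mp hocc
      have halow : t - ((2^(L':ℕ) : ℕ) : ℤ) + 1 ≤ a := by
        rw [betaScale] at hdist
        have h1 : ((t - a : ℤ) : ℝ) < ((((2^(L':ℕ) : ℕ) : ℤ)) : ℝ) := by push_cast; linarith
        have := Int.cast_lt.mp h1
        omega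
      by_cases hnear : t - (M:ℤ) + 1 ≤ a
      · left
        exact Set.mem_iUnion₂.mpr ⟨a, Finset.mem_Icc.mpr ⟨by omega, hat⟩, hcylmem⟩
      · right
        push_neg at hnear
        have hfar : a + ((L + (N * r) * ℓ : ℕ) : ℤ) ≤ t := by
          have hMM : (M:ℤ) = ((L + (N * r) * ℓ : ℕ) : ℤ) := by
            rw [hM, myM]
          omega
        obtain ⟨g, hg, hnot⟩ := pigeonhole ℓ hℓ1 (fun s => env s ω) a t N r L hfar hℓL hcond'
        refine Set.mem_iUnion₂.mpr ⟨a, Finset.mem_Icc.mpr ⟨by omega, by omega⟩,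
          Set.mem_iUnion₂.mpr ⟨g, Finset.mem_range.mpr hg, ⟨hcylmem, ?_⟩⟩⟩
        refine Set.mem_iInter₂.mpr ?_
        intro j hj
        have hj' : j < r := Finset.mem_range.mp hj
        intro hmem
        exact hnot j hj' ((occEnd_iff ℓ hℓ1 (fun s => env s ω) (cpt a (g * r + j))).mpr hmem)
    -- measure bounds
    have hcardT : ∀ a : ℤ, (Tc a).card = L := by
      intro a
      rw [hTc]
      simp only [Int.card_Icc]
      omega
    have hcardB : ∀ a : ℤ, ∀ i : ℕ, (blkT a i).card = ℓ := by
      intro a i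
      rw [hblkT]
      simp only [Int.card_Icc]
      omega
    have hNear_le : μ Near ≤ (M : ENNReal) * (1/2 : ENNReal)^L := by
      rw [hNear]
      refine le_trans (measure_biUnion_finset_le _ _) ?_
      have hone : ∀ a ∈ (Finset.Icc (t - (M:ℤ) + 1) t : Finset ℤ),
          μ (cylSet env (Tc a) (bc a)) = (1/2 : ENNReal)^L := by
        intro a _
        rw [show μ (cylSet env (Tc a) (bc a)) = (1/2 : ENNReal) ^ (Tc a).card from
          hiid (Tc a) (bc a), hcardT a]
      rw [Finset.sum_congr rfl hone, Finset.sum_const]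
      have hcard : (Finset.Icc (t - (M:ℤ) + 1) t).card = M := by
        rw [Int.card_Icc]; omega
      rw [hcard, nsmul_eq_mul]
    have hsingle : ∀ a : ℤ, ∀ g : ℕ,
        μ (cylSet env (Tc a) (bc a) ∩
          ⋂ j ∈ Finset.range r, (cylSet env (blkT a (g * r + j)) (blkb a (g * r + j)))ᶜ)
        = (1/2 : ENNReal)^L * (1 - (1/2 : ENNReal)^ℓ)^r := by
      intro a g
      have hkey := key env μ hmeas hiid r (fun j => blkT a (g * r + j))
        (fun j => blkb a (g * r + j)) (Tc a) (bc a) ?_ ?_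
      · rw [hkey, hcardT a]
        congr 1
        rw [Finset.prod_congr rfl (fun j _ => by rw [hcardB a (g*r+j)]), Finset.prod_const,
          Finset.card_range]
      · -- disjoint from Tc a
        intro i _
        rw [Finset.disjoint_left]
        intro s hs1 hs2
        rw [hblkT] at hs1
        rw [hTc] at hs2
        rw [Finset.mem_Icc] at hs1 hs2
        rw [hcpt] at hs1
        have h0 : (0:ℤ) ≤ ((g * r + i : ℕ) : ℤ) * (ℓ : ℤ) := by positivity
        have hc : (ℓ:ℤ) ≤ (L:ℤ) := by exact_mod_cast hℓL
        simp only at hs1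
        omega
      · -- pairwise disjoint
        intro i j hij hjr
        rw [Finset.disjoint_left]
        intro s hs1 hs2
        rw [hblkT, Finset.mem_Icc, hcpt] at hs1 hs2
        simp only at hs1 hs2
        have hmul : ((g * r + i : ℕ) : ℤ) * ℓ + ℓ ≤ ((g * r + j : ℕ) : ℤ) * ℓ := by
          have h1 : (g * r + i + 1) * ℓ ≤ (g * r + j) * ℓ :=
            Nat.mul_le_mul_right ℓ (by omega)
          have h2 := Int.ofNat_le.mpr h1
          push_cast at h2 ⊢
          linarith
        omega
    have hFar_le : μ Far ≤ ((2^(L':ℕ) : ℕ) : ENNReal) * (N : ENNReal) *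
        ((1/2 : ENNReal)^L * (1 - (1/2 : ENNReal)^ℓ)^r) := by
      rw [mul_assoc]
      rw [hFar]
      refine le_trans (measure_biUnion_finset_le _ _) ?_
      have hinner : ∀ a ∈ (Finset.Icc (t - ((2^(L':ℕ) : ℕ) : ℤ) + 1) (t - (M:ℤ)) : Finset ℤ),
          μ (⋃ g ∈ Finset.range N, (cylSet env (Tc a) (bc a) ∩
            ⋂ j ∈ Finset.range r, (cylSet env (blkT a (g * r + j)) (blkb a (g * r + j)))ᶜ))
          ≤ (N : ENNReal) * ((1/2 : ENNReal)^L * (1 - (1/2 : ENNReal)^ℓ)^r) := by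
        intro a _
        refine le_trans (measure_biUnion_finset_le _ _) ?_
        rw [Finset.sum_congr rfl (fun g _ => hsingle a g), Finset.sum_const, Finset.card_range,
          nsmul_eq_mul]
      refine le_trans (Finset.sum_le_sum hinner) ?_
      rw [Finset.sum_const, nsmul_eq_mul]
      apply mul_le_mul_left
      apply Nat.cast_le.mpr
      rw [Int.card_Icc, Int.toNat_le]
      push_cast
      linarith [Int.natCast_nonneg M]
    have hmuE : μ E ≤ (M : ENNReal) * (1/2 : ENNReal)^L + ((2^(L':ℕ) : ℕ) : ENNReal) *
        (N : ENNReal) * ((1/2 : ENNReal)^L * (1 - (1/2 : ENNReal)^ℓ)^r) :=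
      le_trans (measure_mono hsub) (le_trans (measure_union_le _ _)
        (add_le_add hNear_le hFar_le))
    refine le_trans hmuE (le_of_eq (Eq.symm ?_))
    -- convert to ofReal
    have hhalf : (1/2 : ENNReal) = ENNReal.ofReal (1/2 : ℝ) := by
      rw [ENNReal.ofReal_div_of_pos (by norm_num)]
      norm_num
    have hq1 : ((1:ℝ)/2)^ℓ ≤ 1 := pow_le_one₀ (by norm_num) (by norm_num)
    have e2 : ENNReal.ofReal ((1/2:ℝ)^ℓ) = (1/2 : ENNReal)^ℓ := by
      rw [ENNReal.ofReal_pow (by norm_num), ← hhalf]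
    have e1 : ENNReal.ofReal ((1/2:ℝ)^L) = (1/2 : ENNReal)^L := by
      rw [ENNReal.ofReal_pow (by norm_num), ← hhalf]
    have e3 : ENNReal.ofReal (1 - (1/2:ℝ)^ℓ) = 1 - (1/2 : ENNReal)^ℓ := by
      rw [ENNReal.ofReal_sub _ (by positivity), ENNReal.ofReal_one, e2]
    have e4 : ENNReal.ofReal ((1 - (1/2:ℝ)^ℓ)^r) = (1 - (1/2 : ENNReal)^ℓ)^r := by
      rw [ENNReal.ofReal_pow (by linarith), e3]
    have e6 : ENNReal.ofReal ((2:ℝ)^(L':ℕ)) = ((2^(L':ℕ) : ℕ) : ENNReal) := by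
      rw [show ((2:ℝ)^(L':ℕ)) = ((2^(L':ℕ) : ℕ) : ℝ) by push_cast; ring,
        ENNReal.ofReal_natCast]
    rw [myR, ENNReal.ofReal_add (by positivity)
        (mul_nonneg (mul_nonneg (by positivity) (by positivity))
          (mul_nonneg (by positivity) (pow_nonneg (by linarith) _))),
      ENNReal.ofReal_mul (by positivity), ENNReal.ofReal_mul (by positivity),
      ENNReal.ofReal_mul (by positivity), ENNReal.ofReal_mul (by positivity),
      e1, e4, e6, ENNReal.ofReal_natCast, ENNReal.ofReal_natCast]
  have hRtend : Tendsto (fun k => myR ε k) atTop (𝓝 0) := by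
    apply squeeze_zero' (Filter.Eventually.of_forall (fun k => myR_nonneg ε hε0 k))
    · exact Filter.eventually_atTop.mpr ⟨1, fun k hk => myR_le ε hε0 hε1 k hk⟩
    · exact g_tendsto ε hε0 hε1
  have hOtend : Tendsto (fun k => ENNReal.ofReal (myR ε k)) atTop (𝓝 0) := by
    have := ENNReal.tendsto_ofReal hRtend
    simpa using this
  have hle : μ E ≤ 0 := ge_of_tendsto hOtend
    (Filter.eventually_atTop.mpr ⟨kstar + 2, fun k hk => hbound k (by omega) (by omega)⟩)
  exact le_antisymm hle zero_le
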